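/- The minimum of (1 − cos(2πx₀)) + Σ_{i=1}^{3} (1 − cos(2πx_i)) over all (x₀, x₁, x₂, x₃) ∈ ℝ⁴ satisfying 3x₀ + x₁ + x₂ + x₃ ≥ 2 and |x_i| ≤ 1/2 for all 0 ≤ i ≤ 3 equals 7/2. (This is the value of the relaxed program P({0}, |ν|) on the 3-regular honeycomb tiling when |ν₀| = 2.) -/

import Mathlib

open Real

private lemma sqrt3_lb : (1.732 : ℝ) ≤ Real.sqrt 3 := by
  nlinarith [Real.sq_sqrt (show (0:ℝ) ≤ 3 by norm_num), Real.sqrt_nonneg 3]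

private lemma sqrt3_ub : Real.sqrt 3 ≤ (1.7321 : ℝ) := by
  nlinarith [Real.sq_sqrt (show (0:ℝ) ≤ 3 by norm_num), Real.sqrt_nonneg 3]

private lemma sqrt2_lb : (1.414 : ℝ) ≤ Real.sqrt 2 := by
  nlinarith [Real.sq_sqrt (show (0:ℝ) ≤ 2 by norm_num), Real.sqrt_nonneg 2]

/-- `1 - cos (2t) = 2 sin t ^ 2` -/
private lemma one_sub_cos_two_mul (t : ℝ) : 1 - Real.cos (2 * t) = 2 * Real.sin t ^ 2 := by
  have h := Real.cos_two_mul t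
  have h2 := Real.sin_sq_add_cos_sq t
  nlinarith [h, h2]

/-- quadratic minorant on `[0, 1/2]` -/
private lemma sq_bound {x : ℝ} (h0 : 0 ≤ x) (h1 : x ≤ 1 / 2) :
    8 * x ^ 2 ≤ 1 - Real.cos (2 * π * x) := by
  have hpi := Real.pi_gt_three
  have hsin : 2 * x ≤ Real.sin (π * x) := by
    have := Real.mul_le_sin (x := π * x) (by positivity) (by nlinarith)
    calc 2 * x = 2 / π * (π * x) := by field_simp
    _ ≤ Real.sin (π * x) := this
  have h : 2 * π * x = 2 * (π * x) := by ring
  rw [h, one_sub_cos_two_mul]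
  nlinarith [hsin]

/-- linear minorant on `[1/4, 1/2]` -/
private lemma lin_bound {x : ℝ} (h0 : 1 / 4 ≤ x) (h1 : x ≤ 1 / 2) :
    4 * x ≤ 1 - Real.cos (2 * π * x) := by
  have hpi := Real.pi_gt_three
  have hs : Real.cos (2 * π * x) = -Real.cos (π - 2 * π * x) := by
    rw [Real.cos_pi_sub]; ring_nf
  have hcos : 1 - 2 / π * (π - 2 * π * x) ≤ Real.cos (π - 2 * π * x) := by
    apply Real.one_sub_mul_le_cos (by nlinarith) (by nlinarith)
  have he : 1 - 2 / π * (π - 2 * π * x) = 4 * x - 1 := by field_simp; ring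
  rw [hs]
  nlinarith [hcos, he]

private lemma sin_le_s3 {x : ℝ} (h0 : 0 ≤ x) (h1 : x ≤ π / 3) : Real.sin x ≤ Real.sqrt 3 / 2 := by
  have hpi := Real.pi_pos
  have := Real.strictMonoOn_sin.monotoneOn (a := x) (b := π / 3)
    ⟨by linarith, by linarith⟩ ⟨by linarith, by linarith⟩ h1
  rwa [Real.sin_pi_div_three] at this

private lemma s3_le_sin {x : ℝ} (h0 : π / 3 ≤ x) (h1 : x ≤ 2 * π / 3) :
    Real.sqrt 3 / 2 ≤ Real.sin x := by
  have hpi := Real.pi_pos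
  rcases le_or_gt x (π / 2) with hx | hx
  · have := Real.strictMonoOn_sin.monotoneOn (a := π / 3) (b := x)
      ⟨by linarith, by linarith⟩ ⟨by linarith, by linarith⟩ h0
    rwa [Real.sin_pi_div_three] at this
  · have hrw : Real.sin x = Real.sin (π - x) := (Real.sin_pi_sub x).symm
    rw [hrw]
    have := Real.strictMonoOn_sin.monotoneOn (a := π / 3) (b := π - x)
      ⟨by linarith, by linarith⟩ ⟨by linarith, by linarith⟩ (by linarith)
    rwa [Real.sin_pi_div_three] at this

/-- tangent-line bound for cos at π/3, valid on `[0, 3π/4]`. -/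
private lemma cos_tangent {θ : ℝ} (h0 : 0 ≤ θ) (h1 : θ ≤ 3 * π / 4) :
    Real.cos θ ≤ 1 / 2 - Real.sqrt 3 / 2 * (θ - π / 3) := by
  have hpi := Real.pi_pos
  set g : ℝ → ℝ := fun t => 1 / 2 - Real.sqrt 3 / 2 * (t - π / 3) - Real.cos t with hg
  have hder : ∀ t : ℝ, HasDerivAt g (Real.sin t - Real.sqrt 3 / 2) t := by
    intro t
    have h1 : HasDerivAt (fun t : ℝ => t - π / 3) 1 t := (hasDerivAt_id t).sub_const _
    have h2 := h1.const_mul (Real.sqrt 3 / 2)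
    have h3 := (hasDerivAt_const t ((1:ℝ) / 2)).sub h2
    have h4 := h3.sub (Real.hasDerivAt_cos t)
    exact (h4 : HasDerivAt g _ t).congr_deriv (by ring)
  have hcont : Continuous g := by
    simp only [hg]; fun_prop
  have hg13 : g (π / 3) = 0 := by
    simp only [hg, Real.cos_pi_div_three]; ring
  suffices h : 0 ≤ g θ by simp only [hg] at h; linarith
  rcases le_or_gt θ (π / 3) with hc | hc
  · -- antitone on [0, π/3]
    have hanti : AntitoneOn g (Set.Icc 0 (π / 3)) := by
      apply antitoneOn_of_deriv_nonpos (convex_Icc _ _) hcont.continuousOn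
      · intro x hx; exact (hder x).differentiableAt.differentiableWithinAt
      · intro x hx
        rw [interior_Icc] at hx
        rw [(hder x).deriv]
        have := sin_le_s3 hx.1.le hx.2.le
        linarith
    have := hanti ⟨h0, hc⟩ ⟨by linarith, le_refl _⟩ hc
    rw [hg13] at this; linarith
  · rcases le_or_gt θ (2 * π / 3) with hc2 | hc2
    · -- monotone on [π/3, 2π/3]
      have hmono : MonotoneOn g (Set.Icc (π / 3) (2 * π / 3)) := by
        apply monotoneOn_of_deriv_nonneg (convex_Icc _ _) hcont.continuousOn
        · intro x hx; exact (hder x).differentiableAt.differentiableWithinAt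
        · intro x hx
          rw [interior_Icc] at hx
          rw [(hder x).deriv]
          have := s3_le_sin hx.1.le hx.2.le
          linarith
      have := hmono ⟨le_refl _, by linarith⟩ ⟨hc.le, hc2⟩ hc.le
      rw [hg13] at this; linarith
    · -- antitone on [2π/3, 3π/4], min value g(3π/4) ≥ 0
      have hanti : AntitoneOn g (Set.Icc (2 * π / 3) (3 * π / 4)) := by
        apply antitoneOn_of_deriv_nonpos (convex_Icc _ _) hcont.continuousOn
        · intro x hx; exact (hder x).differentiableAt.differentiableWithinAt
        · intro x hx
          rw [interior_Icc] at hx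
          rw [(hder x).deriv]
          have hs : Real.sin x = Real.sin (π - x) := (Real.sin_pi_sub x).symm
          have := sin_le_s3 (x := π - x) (by linarith [hx.2]) (by linarith [hx.1])
          rw [hs]; linarith
      have hend : 0 ≤ g (3 * π / 4) := by
        have hc34 : Real.cos (3 * π / 4) = -(Real.sqrt 2 / 2) := by
          have : (3 * π / 4 : ℝ) = π - π / 4 := by ring
          rw [this, Real.cos_pi_sub, Real.cos_pi_div_four]
        simp only [hg, hc34]
        have h2 := sqrt2_lb
        have h3 := sqrt3_ub
        have hpu := Real.pi_lt_d6
        have h3n := Real.sqrt_nonneg 3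
        nlinarith
      have := hanti ⟨hc2.le, h1⟩ ⟨by linarith, le_refl _⟩ h1
      exact hend.trans this

/-- tangent-line minorant on `[0, 3/8]` -/
private lemma tan_bound {x : ℝ} (h0 : 0 ≤ x) (h1 : x ≤ 3 / 8) :
    1 / 2 + π * Real.sqrt 3 * (x - 1 / 6) ≤ 1 - Real.cos (2 * π * x) := by
  have hpi := Real.pi_pos
  have h := cos_tangent (θ := 2 * π * x) (by positivity) (by nlinarith)
  have he : Real.sqrt 3 / 2 * (2 * π * x - π / 3) = π * Real.sqrt 3 * (x - 1 / 6) := by ring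
  linarith [h, he.ge, he.le]

private lemma Kge : (3 : ℝ) ≤ π * Real.sqrt 3 := by
  nlinarith [Real.pi_gt_three, sqrt3_lb, Real.sqrt_nonneg 3]

private lemma caseA {a b c d : ℝ} (ha0 : 0 ≤ a) (ha : a ≤ 3 / 8) (hb0 : 0 ≤ b) (hb : b ≤ 3 / 8)
    (hc0 : 0 ≤ c) (hc : c ≤ 3 / 8) (hd0 : 0 ≤ d) (hd : d ≤ 3 / 8)
    (hcon : 2 ≤ 3 * a + b + c + d) :
    7 / 2 ≤ (1 - Real.cos (2 * π * a)) + (1 - Real.cos (2 * π * b)) +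
      (1 - Real.cos (2 * π * c)) + (1 - Real.cos (2 * π * d)) := by
  have ta := tan_bound ha0 ha
  have tb := tan_bound hb0 hb
  have tc := tan_bound hc0 hc
  have td := tan_bound hd0 hd
  have h1 : (7 : ℝ) / 12 ≤ a + b + c + d - 2 / 3 := by linarith
  have h2 : (π * Real.sqrt 3) * (7 / 12) ≤ (π * Real.sqrt 3) * (a + b + c + d - 2 / 3) :=
    mul_le_mul_of_nonneg_left h1 (by positivity)
  nlinarith [ta, tb, tc, td, h2, Kge]

private lemma caseB0 {a b c d : ℝ} (ha : 3 / 8 ≤ a) (ha1 : a ≤ 1 / 2)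
    (hb0 : 0 ≤ b) (hb : b ≤ 3 / 8) (hc0 : 0 ≤ c) (hc : c ≤ 3 / 8) (hd0 : 0 ≤ d) (hd : d ≤ 3 / 8)
    (hcon : 2 ≤ 3 * a + b + c + d) :
    7 / 2 ≤ (1 - Real.cos (2 * π * a)) + (1 - Real.cos (2 * π * b)) +
      (1 - Real.cos (2 * π * c)) + (1 - Real.cos (2 * π * d)) := by
  have ma := lin_bound (by linarith) ha1
  have tb := tan_bound hb0 hb
  have tc := tan_bound hc0 hc
  have td := tan_bound hd0 hd
  have hh1 : 0 ≤ (π * Real.sqrt 3 - 4 / 3) * (1 / 2 - a) :=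
    mul_nonneg (by nlinarith [Kge]) (by linarith)
  have hh2 : 0 ≤ (π * Real.sqrt 3) * (b + c + d - (2 - 3 * a)) :=
    mul_nonneg (by positivity) (by linarith)
  nlinarith [ma, tb, tc, td, hh1, hh2]

private lemma caseC0 {a b c d : ℝ} (ha0 : 0 ≤ a) (ha : a ≤ 3 / 8)
    (hb0 : 0 ≤ b) (hb : b ≤ 3 / 8) (hc0 : 0 ≤ c) (hc : c ≤ 3 / 8)
    (hd : 3 / 8 ≤ d) (hd1 : d ≤ 1 / 2)
    (hcon : 2 ≤ 3 * a + b + c + d) :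
    7 / 2 ≤ (1 - Real.cos (2 * π * a)) + (1 - Real.cos (2 * π * b)) +
      (1 - Real.cos (2 * π * c)) + (1 - Real.cos (2 * π * d)) := by
  have ta := tan_bound ha0 ha
  have tb := tan_bound hb0 hb
  have tc := tan_bound hc0 hc
  have md := lin_bound (by linarith) hd1
  have hh : 0 ≤ (π * Real.sqrt 3) * (a + b + c - 3 / 4) :=
    mul_nonneg (by positivity) (by linarith)
  nlinarith [ta, tb, tc, md, hh, Kge]

private lemma caseB1 {a b c d : ℝ} (ha : 3 / 8 ≤ a) (ha1 : a ≤ 1 / 2)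
    (hb0 : 0 ≤ b) (hb1 : b ≤ 1 / 2) (hc0 : 0 ≤ c) (hc1 : c ≤ 1 / 2)
    (hd : 3 / 8 ≤ d) (hd1 : d ≤ 1 / 2)
    (hcon : 2 ≤ 3 * a + b + c + d) :
    7 / 2 ≤ (1 - Real.cos (2 * π * a)) + (1 - Real.cos (2 * π * b)) +
      (1 - Real.cos (2 * π * c)) + (1 - Real.cos (2 * π * d)) := by
  have ma := lin_bound (by linarith) ha1
  have mb := sq_bound hb0 hb1
  have mc := sq_bound hc0 hc1
  have md := lin_bound (by linarith) hd1
  nlinarith [ma, mb, mc, md, sq_nonneg (b + c - 1 / 6), sq_nonneg (b - c), hcon, hd]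

private lemma caseC1 {a b c d : ℝ} (ha0 : 0 ≤ a) (ha1 : a ≤ 1 / 2)
    (hb0 : 0 ≤ b) (hb1 : b ≤ 1 / 2)
    (hc : 3 / 8 ≤ c) (hc1 : c ≤ 1 / 2) (hd : 3 / 8 ≤ d) (hd1 : d ≤ 1 / 2)
    (hcon : 2 ≤ 3 * a + b + c + d) :
    7 / 2 ≤ (1 - Real.cos (2 * π * a)) + (1 - Real.cos (2 * π * b)) +
      (1 - Real.cos (2 * π * c)) + (1 - Real.cos (2 * π * d)) := by
  have ma := sq_bound ha0 ha1
  have mb := sq_bound hb0 hb1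
  have mc := lin_bound (by linarith) hc1
  have md := lin_bound (by linarith) hd1
  have h1 : 0 ≤ 3 * a + b - (2 - c - d) := by linarith
  have h2 : (0:ℝ) ≤ 2 - c - d := by linarith
  have h3 : (0:ℝ) ≤ 2 - c - d - 1 := by linarith
  nlinarith [ma, mb, mc, md, sq_nonneg (a - 3 * b),
    mul_nonneg h1 (by linarith : (0:ℝ) ≤ 3 * a + b + (2 - c - d)),
    mul_nonneg h3 h2]

private lemma key {a b c d : ℝ} (ha0 : 0 ≤ a) (ha1 : a ≤ 1 / 2)
    (hb0 : 0 ≤ b) (hb1 : b ≤ 1 / 2) (hc0 : 0 ≤ c) (hc1 : c ≤ 1 / 2)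
    (hd0 : 0 ≤ d) (hd1 : d ≤ 1 / 2)
    (hcon : 2 ≤ 3 * a + b + c + d) :
    7 / 2 ≤ (1 - Real.cos (2 * π * a)) + (1 - Real.cos (2 * π * b)) +
      (1 - Real.cos (2 * π * c)) + (1 - Real.cos (2 * π * d)) := by
  rcases le_or_gt b (3 / 8) with hb | hb
  · rcases le_or_gt c (3 / 8) with hc | hc
    · rcases le_or_gt d (3 / 8) with hd | hd
      · rcases le_or_gt a (3 / 8) with ha | ha
        · exact caseA ha0 ha hb0 hb hc0 hc hd0 hd hcon
        · exact caseB0 ha.le ha1 hb0 hb hc0 hc hd0 hd hcon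
      · rcases le_or_gt a (3 / 8) with ha | ha
        · exact caseC0 ha0 ha hb0 hb hc0 hc hd.le hd1 hcon
        · exact caseB1 ha.le ha1 hb0 hb1 hc0 hc1 hd.le hd1 hcon
    · rcases le_or_gt d (3 / 8) with hd | hd
      · rcases le_or_gt a (3 / 8) with ha | ha
        · linarith [caseC0 ha0 ha hb0 hb hd0 hd hc.le hc1 (by linarith)]
        · linarith [caseB1 ha.le ha1 hb0 hb1 hd0 hd1 hc.le hc1 (by linarith)]
      · linarith [caseC1 ha0 ha1 hb0 hb1 hc.le hc1 hd.le hd1 hcon]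
  · rcases le_or_gt c (3 / 8) with hc | hc
    · rcases le_or_gt d (3 / 8) with hd | hd
      · rcases le_or_gt a (3 / 8) with ha | ha
        · linarith [caseC0 ha0 ha hc0 hc hd0 hd hb.le hb1 (by linarith)]
        · linarith [caseB1 ha.le ha1 hc0 hc1 hd0 hd1 hb.le hb1 (by linarith)]
      · linarith [caseC1 ha0 ha1 hc0 hc1 hb.le hb1 hd.le hd1 (by linarith)]
    · linarith [caseC1 ha0 ha1 hd0 hd1 hb.le hb1 hc.le hc1 (by linarith)]

/-- The minimum of `Σ_{i=0}^{3} (1 − cos(2πx_i))` subject to `3x₀ + x₁ + x₂ + x₃ ≥ 2`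
and `|x_i| ≤ 1/2` equals `7/2`.  This is the value of the relaxed program `P({0}, |ν|)` on
the 3-regular honeycomb tiling when `|ν₀| = 2`. -/
theorem honeycomb_height_two_program :
    IsLeast {s : ℝ | ∃ x : Fin 4 → ℝ,
        2 ≤ 3 * x 0 + (∑ i : Fin 3, x i.succ) ∧
        (∀ i, |x i| ≤ 1 / 2) ∧
        s = ∑ i : Fin 4, (1 - Real.cos (2 * π * x i))}
      (7 / 2) := by
  constructor
  · refine ⟨fun i => if i = 0 then 1 / 2 else 1 / 6, ?_, ?_, ?_⟩
    · rw [Fin.sum_univ_three]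
      simp only [Fin.succ_ne_zero, if_false, if_pos rfl]
      norm_num
    · intro i
      show |if i = 0 then (1:ℝ)/2 else 1/6| ≤ 1/2
      by_cases h : i = 0
      · rw [if_pos h, abs_of_nonneg (by norm_num : (0:ℝ) ≤ 1/2)]
      · rw [if_neg h, abs_of_nonneg (by norm_num : (0:ℝ) ≤ 1/6)]; norm_num
    · rw [Fin.sum_univ_four]
      have e0 : ((1 : Fin 4) = 0) = False := by simp
      have e2 : ((2 : Fin 4) = 0) = False := by simp
      have e3 : ((3 : Fin 4) = 0) = False := by simp
      simp only [if_pos rfl, e0, e2, e3, if_false, if_true]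
      have h1 : 2 * π * (1 / 2 : ℝ) = π := by ring
      have h2 : 2 * π * (1 / 6 : ℝ) = π / 3 := by ring
      rw [h1, h2, Real.cos_pi, Real.cos_pi_div_three]
      norm_num
  · rintro s ⟨x, hcon, hbox, rfl⟩
    rw [Fin.sum_univ_four]
    rw [Fin.sum_univ_three] at hcon
    have e1 : ((0 : Fin 3).succ) = (1 : Fin 4) := rfl
    have e2 : ((1 : Fin 3).succ) = (2 : Fin 4) := rfl
    have e3 : ((2 : Fin 3).succ) = (3 : Fin 4) := rfl
    rw [e1, e2, e3] at hcon
    have habs : ∀ i : Fin 4, Real.cos (2 * π * x i) = Real.cos (2 * π * |x i|) := by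
      intro i
      rw [show 2 * π * |x i| = |2 * π * x i| by
        rw [abs_mul, abs_of_nonneg (by positivity : (0:ℝ) ≤ 2 * π)], Real.cos_abs]
    rw [habs 0, habs 1, habs 2, habs 3]
    exact key (abs_nonneg _) (hbox 0) (abs_nonneg _) (hbox 1) (abs_nonneg _) (hbox 2)
      (abs_nonneg _) (hbox 3)
      (by linarith [le_abs_self (x 0), le_abs_self (x 1), le_abs_self (x 2), le_abs_self (x 3)])
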